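/- Existence of γ-normal forms: for every λ^p-term M there exists a λ^p-term N such that M ↠_γ N and N contains no γ-redexes (no subterm of N is an application P Q in which P or Q is a collection). -/

import Mathlib

/-- λ^p-terms: M ::= x | M₁ M₂ | λx.M | (M₁, M₂) over a countably infinite
set of variables. -/
inductive PTerm : Type
  | var : ℕ → PTerm
  | app : PTerm → PTerm → PTerm
  | lam : ℕ → PTerm → PTerm
  | coll : PTerm → PTerm → PTerm

/-- The congruence on λ^p-terms generated by (ClnOrd) M,N ≡ N,M and
(ClnNest) (M,N),P ≡ M,(N,P): the smallest equivalence relation compatible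
with all term constructors containing the two axioms. -/
inductive Cong : PTerm → PTerm → Prop
  | refl (M : PTerm) : Cong M M
  | symm {M N : PTerm} : Cong M N → Cong N M
  | trans {M N P : PTerm} : Cong M N → Cong N P → Cong M P
  | app {M M' N N' : PTerm} : Cong M M' → Cong N N' → Cong (.app M N) (.app M' N')
  | lam (x : ℕ) {M M' : PTerm} : Cong M M' → Cong (.lam x M) (.lam x M')
  | coll {M M' N N' : PTerm} : Cong M M' → Cong N N' → Cong (.coll M N) (.coll M' N')
  | ord (M N : PTerm) : Cong (.coll M N) (.coll N M)
  | nest (M N P : PTerm) : Cong (.coll (.coll M N) P) (.coll M (.coll N P))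

/-- `collOf M [N₁,…,Nₖ]` is the right-associated collection `(M, N₁, …, Nₖ)`. -/
def collOf : PTerm → List PTerm → PTerm
  | M, [] => M
  | M, N :: L => .coll M (collOf N L)

/-- A term is a collection if its outermost constructor is the comma. -/
def IsColl : PTerm → Prop
  | .coll _ _ => True
  | _ => False

/-- The γ-relation of the λ^p-calculus: it relates each application P Q, where
P is congruent to a collection (M₀,…,M_m) and Q to a collection (N₀,…,N_n)
with at least one of them a proper (more-than-one-element) collection, to the
collection of all applications M_i N_j. -/
inductive Gamma : PTerm → PTerm → Prop
  | mk (P Q M N : PTerm) (Ms Ns : List PTerm)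
      (hP : Cong P (collOf M Ms)) (hQ : Cong Q (collOf N Ns))
      (hn : Ms ≠ [] ∨ Ns ≠ []) :
      Gamma (.app P Q)
        (collOf (.app M N)
          (Ns.map (.app M) ++ Ms.flatMap fun Mi => (N :: Ns).map (.app Mi)))

/-- One-step γ-reduction: the compatible closure (closure under all term
constructors) of the γ-relation. -/
inductive StepG : PTerm → PTerm → Prop
  | gamma {M N : PTerm} : Gamma M N → StepG M N
  | appL {M M' N : PTerm} : StepG M M' → StepG (.app M N) (.app M' N)
  | appR {M N N' : PTerm} : StepG N N' → StepG (.app M N) (.app M N')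
  | lam (x : ℕ) {M M' : PTerm} : StepG M M' → StepG (.lam x M) (.lam x M')
  | collL {M M' N : PTerm} : StepG M M' → StepG (.coll M N) (.coll M' N)
  | collR {M N N' : PTerm} : StepG N N' → StepG (.coll M N) (.coll M N')

/-- γ-reduction ↠_γ : the reflexive-transitive closure of one-step
γ-reduction, on terms considered up to the congruence generated by
(ClnOrd) and (ClnNest). -/
def RedG : PTerm → PTerm → Prop :=
  Relation.ReflTransGen (fun M N => StepG M N ∨ Cong M N)

/-- A term is in γ-normal form if it contains no γ-redex: no subterm is an
application P Q in which P or Q is a collection. -/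
def NoGammaRedex : PTerm → Prop
  | .var _ => True
  | .lam _ M => NoGammaRedex M
  | .app P Q => ¬ IsColl P ∧ ¬ IsColl Q ∧ NoGammaRedex P ∧ NoGammaRedex Q
  | .coll P Q => NoGammaRedex P ∧ NoGammaRedex Q

/-- Normalization: returns the components of the γ-normal form as a
nonempty list (head, tail). -/
def nfC : PTerm → PTerm × List PTerm
  | .var x => (.var x, [])
  | .lam x M => (.lam x (collOf (nfC M).1 (nfC M).2), [])
  | .coll M N => ((nfC M).1, (nfC M).2 ++ (nfC N).1 :: (nfC N).2)
  | .app M N =>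
      (.app (nfC M).1 (nfC N).1,
        (nfC N).2.map (.app (nfC M).1) ++
          (nfC M).2.flatMap fun Mi => ((nfC N).1 :: (nfC N).2).map (.app Mi))

lemma noRedex_collOf : ∀ (L : List PTerm) (M : PTerm), NoGammaRedex M →
    (∀ P ∈ L, NoGammaRedex P) → NoGammaRedex (collOf M L)
  | [], M, hM, _ => hM
  | N :: L, M, hM, hL => by
      refine ⟨hM, noRedex_collOf L N (hL N (by simp)) fun P hP => hL P (by simp [hP])⟩

lemma nfC_good : ∀ M : PTerm, ∀ P ∈ (nfC M).1 :: (nfC M).2, NoGammaRedex P ∧ ¬ IsColl P := by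
  intro M
  induction M with
  | var x => simp [nfC, NoGammaRedex, IsColl]
  | lam x M ih =>
      intro P hP
      simp only [nfC, List.mem_singleton] at hP
      subst hP
      refine ⟨noRedex_collOf _ _ (ih _ (by simp)).1 (fun Q hQ => (ih Q (by simp [hQ])).1), ?_⟩
      simp [IsColl]
  | coll M N ihM ihN =>
      intro P hP
      simp only [nfC, List.mem_cons, List.mem_append] at hP
      rcases hP with h | h | h
      · exact ihM P (by simp [h])
      · exact ihM P (by simp [h])
      · exact ihN P (by simp [h])
  | app M N ihM ihN =>
      intro P hP
      have key : ∀ A B : PTerm, A ∈ (nfC M).1 :: (nfC M).2 → B ∈ (nfC N).1 :: (nfC N).2 →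
          NoGammaRedex (PTerm.app A B) ∧ ¬ IsColl (PTerm.app A B) := by
        intro A B hA hB
        obtain ⟨hA1, hA2⟩ := ihM A hA
        obtain ⟨hB1, hB2⟩ := ihN B hB
        exact ⟨⟨hA2, hB2, hA1, hB1⟩, by simp [IsColl]⟩
      simp only [nfC, List.mem_cons, List.mem_append, List.mem_map, List.mem_flatMap] at hP
      rcases hP with h | ⟨b, hb, rfl⟩ | ⟨a, ha, b, hb, rfl⟩
      · subst h; exact key _ _ (by simp) (by simp)
      · exact key _ _ (by simp) (by simp [hb])
      · rcases hb with h | h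
        · subst h; exact key _ _ (by simp [ha]) (by simp)
        · exact key _ _ (by simp [ha]) (by simp [h])

lemma RedG.appL' {M M' N : PTerm} (h : RedG M M') : RedG (.app M N) (.app M' N) :=
  Relation.ReflTransGen.lift (fun x => PTerm.app x N)
    (fun _ _ h => h.elim (fun s => Or.inl (.appL s)) (fun c => Or.inr (.app c (Cong.refl _)))) _ _ h

lemma RedG.appR' {M N N' : PTerm} (h : RedG N N') : RedG (.app M N) (.app M N') :=
  Relation.ReflTransGen.lift (fun x => PTerm.app M x)
    (fun _ _ h => h.elim (fun s => Or.inl (.appR s)) (fun c => Or.inr (.app (Cong.refl _) c))) _ _ h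

lemma RedG.lam' {M M' : PTerm} (x : ℕ) (h : RedG M M') : RedG (.lam x M) (.lam x M') :=
  Relation.ReflTransGen.lift (fun m => PTerm.lam x m)
    (fun _ _ h => h.elim (fun s => Or.inl (.lam x s)) (fun c => Or.inr (.lam x c))) _ _ h

lemma RedG.collL' {M M' N : PTerm} (h : RedG M M') : RedG (.coll M N) (.coll M' N) :=
  Relation.ReflTransGen.lift (fun x => PTerm.coll x N)
    (fun _ _ h => h.elim (fun s => Or.inl (.collL s)) (fun c => Or.inr (.coll c (Cong.refl _)))) _ _ h

lemma RedG.collR' {M N N' : PTerm} (h : RedG N N') : RedG (.coll M N) (.coll M N') :=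
  Relation.ReflTransGen.lift (fun x => PTerm.coll M x)
    (fun _ _ h => h.elim (fun s => Or.inl (.collR s)) (fun c => Or.inr (.coll (Cong.refl _) c))) _ _ h

lemma collOf_append_cons : ∀ (L : List PTerm) (M N : PTerm) (L' : List PTerm),
    collOf M (L ++ N :: L') = collOf M (L ++ [collOf N L'])
  | [], M, N, L' => rfl
  | a :: L, M, N, L' => by
      simp only [List.cons_append, collOf]
      exact congrArg (PTerm.coll M) (collOf_append_cons L a N L')

lemma cong_coll_collOf : ∀ (L : List PTerm) (M P : PTerm),
    Cong (.coll (collOf M L) P) (collOf M (L ++ [P]))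
  | [], M, P => Cong.refl _
  | a :: L, M, P => by
      simp only [collOf, List.cons_append]
      exact Cong.trans (Cong.nest M (collOf a L) P)
        (Cong.coll (Cong.refl M) (cong_coll_collOf L a P))

lemma redG_nf : ∀ M : PTerm, RedG M (collOf (nfC M).1 (nfC M).2) := by
  intro M
  induction M with
  | var x => exact Relation.ReflTransGen.refl
  | lam x M ih =>
      simpa [nfC, collOf] using RedG.lam' x ih
  | coll M N ihM ihN =>
      have h1 : RedG (.coll M N) (.coll (collOf (nfC M).1 (nfC M).2) (collOf (nfC N).1 (nfC N).2)) :=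
        Relation.ReflTransGen.trans (RedG.collL' ihM) (RedG.collR' ihN)
      refine h1.trans (Relation.ReflTransGen.single (Or.inr ?_))
      rw [show (collOf (PTerm.coll M N |> nfC).1 (PTerm.coll M N |> nfC).2) =
        collOf (nfC M).1 ((nfC M).2 ++ [collOf (nfC N).1 (nfC N).2]) from by
          rw [show (PTerm.coll M N |> nfC) = ((nfC M).1, (nfC M).2 ++ (nfC N).1 :: (nfC N).2) from rfl]
          exact collOf_append_cons _ _ _ _]
      exact cong_coll_collOf _ _ _
  | app M N ihM ihN =>
      have h1 : RedG (.app M N) (.app (collOf (nfC M).1 (nfC M).2) (collOf (nfC N).1 (nfC N).2)) :=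
        Relation.ReflTransGen.trans (RedG.appL' ihM) (RedG.appR' ihN)
      rcases hM : (nfC M).2 with _ | ⟨a, L⟩
      · rcases hN : (nfC N).2 with _ | ⟨b, L'⟩
        · simpa [nfC, hM, hN, collOf] using h1
        · refine h1.trans (Relation.ReflTransGen.single (Or.inl (StepG.gamma ?_)))
          have := Gamma.mk (collOf (nfC M).1 (nfC M).2) (collOf (nfC N).1 (nfC N).2)
            (nfC M).1 (nfC N).1 (nfC M).2 (nfC N).2 (Cong.refl _) (Cong.refl _)
            (Or.inr (by simp [hN]))
          simpa [nfC] using this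
      · refine h1.trans (Relation.ReflTransGen.single (Or.inl (StepG.gamma ?_)))
        have := Gamma.mk (collOf (nfC M).1 (nfC M).2) (collOf (nfC N).1 (nfC N).2)
          (nfC M).1 (nfC N).1 (nfC M).2 (nfC N).2 (Cong.refl _) (Cong.refl _)
          (Or.inl (by simp [hM]))
        simpa [nfC] using this

/-- Existence of γ-normal forms: for every λ^p-term M there exists a λ^p-term
N such that M ↠_γ N and N contains no γ-redexes. -/
theorem gamma_normal_form_exists (M : PTerm) :
    ∃ N : PTerm, RedG M N ∧ NoGammaRedex N := by
  refine ⟨collOf (nfC M).1 (nfC M).2, redG_nf M, ?_⟩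
  exact noRedex_collOf _ _ (nfC_good M _ (by simp)).1
    (fun P hP => (nfC_good M P (by simp [hP])).1)
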